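/- Let I ⊆ ℝ be an interval, let φ : ℝ → ℝ be twice differentiable on I with φ''(y) ≤ M for all y ∈ I, and let Y be a real-valued random variable on a probability space (Ω, 𝓕, P) taking values in I almost surely, with Y square-integrable and φ(Y) integrable and 𝔼[Y] ∈ I. Then 𝔼[φ(Y)] − φ(𝔼[Y]) ≤ (M/2) · Var(Y), where Var(Y) = 𝔼[(Y − 𝔼[Y])²]. -/

import Mathlib

open MeasureTheory

/-- Pointwise Taylor bound: if `φ''` is bounded by `M` on a convex set `I`, then for
`m, y ∈ I`, `φ y ≤ φ m + φ' m * (y - m) + M / 2 * (y - m) ^ 2`. -/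
lemma taylor_quad_bound (I : Set ℝ) (hI : Convex ℝ I)
    (φ φ' φ'' : ℝ → ℝ) (M : ℝ)
    (hd1 : ∀ y ∈ I, HasDerivAt φ (φ' y) y)
    (hd2 : ∀ y ∈ I, HasDerivAt φ' (φ'' y) y)
    (hM : ∀ y ∈ I, φ'' y ≤ M)
    {m y : ℝ} (hm : m ∈ I) (hy : y ∈ I) :
    φ y ≤ φ m + φ' m * (y - m) + M / 2 * (y - m) ^ 2 := by
  set e : ℝ → ℝ := fun t => M * (t - m) - φ' t + φ' m with he
  set d : ℝ → ℝ := fun t => φ m + φ' m * (t - m) + M / 2 * (t - m) ^ 2 - φ t with hdd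
  have hde : ∀ t ∈ I, HasDerivAt d (e t) t := by
    intro t ht
    have h1 : HasDerivAt (fun t : ℝ => φ m + φ' m * (t - m) + M / 2 * (t - m) ^ 2)
        (φ' m + M * (t - m)) t := by
      have : HasDerivAt (fun t : ℝ => φ m + φ' m * (t - m) + M / 2 * (t - m) ^ 2)
          (0 + φ' m * 1 + M / 2 * (2 * (t - m) ^ 1 * 1)) t := by
        exact ((hasDerivAt_const t (φ m)).add
          (((hasDerivAt_id t).sub_const m).const_mul (φ' m))).add
          ((((hasDerivAt_id t).sub_const m).pow 2).const_mul (M / 2))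
      convert this using 1
      ring
    have := h1.sub (hd1 t ht)
    refine this.congr_deriv ?_
    simp [he]; ring
  have hee : ∀ t ∈ I, HasDerivAt e (M - φ'' t) t := by
    intro t ht
    have h1 : HasDerivAt (fun t : ℝ => M * (t - m)) M t := by
      simpa using ((hasDerivAt_id t).sub_const m).const_mul M
    simpa [he] using (h1.sub (hd2 t ht)).add_const (φ' m)
  have hecont : ContinuousOn e I := fun t ht => (hee t ht).continuousAt.continuousWithinAt
  have hdcont : ContinuousOn d I := fun t ht => (hde t ht).continuousAt.continuousWithinAt
  -- e is monotone on I
  have hemono : MonotoneOn e I := by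
    apply monotoneOn_of_hasDerivWithinAt_nonneg hI hecont
    · intro t ht
      exact (hee t (interior_subset ht)).hasDerivWithinAt.mono interior_subset
    · intro t ht
      have := hM t (interior_subset ht)
      linarith
  have hem : e m = 0 := by simp [he]
  have key : 0 ≤ d y := by
    rcases le_total m y with hmy | hmy
    · -- on I ∩ Ici m, d is monotone
      have hJ : Convex ℝ (I ∩ Set.Ici m) := hI.inter (convex_Ici m)
      have hmonod : MonotoneOn d (I ∩ Set.Ici m) := by
        apply monotoneOn_of_hasDerivWithinAt_nonneg hJ (hdcont.mono Set.inter_subset_left)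
        · intro t ht
          exact (hde t (interior_subset ht).1).hasDerivWithinAt.mono
            (interior_subset.trans Set.inter_subset_left)
        · intro t ht
          have ht' := interior_subset ht
          have := hemono hm ht'.1 ht'.2
          rw [hem] at this; exact this
      have := hmonod ⟨hm, le_refl m⟩ ⟨hy, hmy⟩ hmy
      simpa [hdd] using this
    · -- on I ∩ Iic m, d is antitone
      have hJ : Convex ℝ (I ∩ Set.Iic m) := hI.inter (convex_Iic m)
      have hantid : AntitoneOn d (I ∩ Set.Iic m) := by
        apply antitoneOn_of_hasDerivWithinAt_nonpos hJ (hdcont.mono Set.inter_subset_left)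
        · intro t ht
          exact (hde t (interior_subset ht).1).hasDerivWithinAt.mono
            (interior_subset.trans Set.inter_subset_left)
        · intro t ht
          have ht' := interior_subset ht
          have := hemono ht'.1 hm ht'.2
          rw [hem] at this; exact this
      have := hantid ⟨hy, hmy⟩ ⟨hm, le_refl m⟩ hmy
      simpa [hdd] using this
  simp only [hdd] at key
  linarith

/-- **Jensen-gap bound.**
Let `I ⊆ ℝ` be an interval (a convex set of reals), `φ : ℝ → ℝ` twice
differentiable on `I` (with first derivative `φ'` and second derivative `φ''`
on `I`) satisfying `φ''(y) ≤ M` on `I`, and let `Y` be a square-integrable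
random variable taking values in `I` a.s., with `φ(Y)` integrable and
`𝔼[Y] ∈ I`. Then `𝔼[φ(Y)] − φ(𝔼[Y]) ≤ (M/2) · Var(Y)`. -/
theorem jensen_gap_bound {Ω : Type*} [MeasurableSpace Ω]
    (μ : Measure Ω) [IsProbabilityMeasure μ]
    (I : Set ℝ) (hI : Convex ℝ I)
    (φ φ' φ'' : ℝ → ℝ) (M : ℝ)
    (hd1 : ∀ y ∈ I, HasDerivAt φ (φ' y) y)
    (hd2 : ∀ y ∈ I, HasDerivAt φ' (φ'' y) y)
    (hM : ∀ y ∈ I, φ'' y ≤ M)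
    (Y : Ω → ℝ) (hY2 : MemLp Y 2 μ)
    (hYI : ∀ᵐ ω ∂μ, Y ω ∈ I)
    (hφY : Integrable (fun ω => φ (Y ω)) μ)
    (hmean : (∫ ω, Y ω ∂μ) ∈ I) :
    (∫ ω, φ (Y ω) ∂μ) - φ (∫ ω, Y ω ∂μ)
      ≤ (M / 2) * ∫ ω, (Y ω - ∫ ω', Y ω' ∂μ) ^ 2 ∂μ := by
  set m : ℝ := ∫ ω, Y ω ∂μ with hm
  have hYint : Integrable Y μ := hY2.integrable one_le_two
  have hsq : Integrable (fun ω => (Y ω - m) ^ 2) μ :=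
    (hY2.sub (memLp_const m)).integrable_sq
  have hptwise : ∀ᵐ ω ∂μ,
      φ (Y ω) ≤ φ m + φ' m * (Y ω - m) + M / 2 * (Y ω - m) ^ 2 := by
    filter_upwards [hYI] with ω hω
    exact taylor_quad_bound I hI φ φ' φ'' M hd1 hd2 hM hmean hω
  have hrhsint : Integrable (fun ω => φ m + φ' m * (Y ω - m) + M / 2 * (Y ω - m) ^ 2) μ := by
    exact ((integrable_const _).add (((hYint.sub (integrable_const m)).const_mul _))).add
      (hsq.const_mul _)
  have hle : (∫ ω, φ (Y ω) ∂μ)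
      ≤ ∫ ω, (φ m + φ' m * (Y ω - m) + M / 2 * (Y ω - m) ^ 2) ∂μ :=
    integral_mono_ae hφY hrhsint hptwise
  have ia : Integrable (fun ω => φ' m * (Y ω - m)) μ := by
    exact (hYint.sub (integrable_const m)).const_mul _
  have ib : Integrable (fun ω => M / 2 * (Y ω - m) ^ 2) μ := by
    exact hsq.const_mul _
  have ic : Integrable (fun ω => φ m + φ' m * (Y ω - m)) μ := (integrable_const _).add ia
  have hsplit : ∫ ω, (φ m + φ' m * (Y ω - m) + M / 2 * (Y ω - m) ^ 2) ∂μ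
      = φ m + φ' m * (∫ ω, (Y ω - m) ∂μ) + M / 2 * ∫ ω, (Y ω - m) ^ 2 ∂μ := by
    rw [integral_add ic ib, integral_add (integrable_const _) ia,
      integral_const, integral_const_mul, integral_const_mul]
    simp
  have hcentered : ∫ ω, (Y ω - m) ∂μ = 0 := by
    rw [integral_sub hYint (integrable_const m), integral_const]
    simp [hm]
  rw [hsplit, hcentered] at hle
  simp only [mul_zero, add_zero] at hle
  linarith
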